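/- Let G be a finite connected simple graph on n vertices. Define the sequence x_1 = 1 and x_{i+1} = x_i + Φ_V(G, x_i) + 1 (truncating x_i at n when forming Φ_V if necessary), and let I be the smallest index with x_I ≥ n. Then the cooling number satisfies CL(G) ≤ I. -/

import Mathlib

/-- A cooling sequence for `G`: a sequence `v : Fin k → V` of sources (the `i`-th source,
0-based, is chosen in round `i + 1`) such that each source is uncooled when chosen
(`dist (v i) (v j) > j - i` for `i < j` in 1-based indexing), and the sequence cannot be
extended: every vertex is cooled by the end of round `k + 1`. -/
def IsCoolingSeq {V : Type*} (G : SimpleGraph V) {k : ℕ} (v : Fin k → V) : Prop :=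
  (∀ i j : Fin k, i < j → (j : ℕ) - (i : ℕ) < G.dist (v i) (v j)) ∧
  (∀ u : V, ∃ i : Fin k, (i : ℕ) + 1 + G.dist (v i) u ≤ k + 1)

/-- The round in which the cooling process with sources `v` ends: the maximum over
vertices `u` of the first round in which `u` is cooled, `min_i (i + dist (v i) u)`
(1-based `i`). -/
noncomputable def coolTime {V : Type*} [Fintype V] (G : SimpleGraph V) {k : ℕ}
    (v : Fin k → V) : ℕ :=
  Finset.univ.sup fun u : V => sInf {m : ℕ | ∃ i : Fin k, m = (i : ℕ) + 1 + G.dist (v i) u}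

/-- The cooling number of `G`: the maximum, over all cooling sequences of `G`, of the
round in which the cooling process ends. -/
noncomputable def coolingNumber {V : Type*} [Fintype V] (G : SimpleGraph V) : ℕ :=
  sSup {T : ℕ | ∃ (k : ℕ) (v : Fin k → V), IsCoolingSeq G v ∧ T = coolTime G v}

/-- The node border of `S`: the set of vertices outside `S` adjacent to some vertex
of `S`. -/
def nodeBorder {V : Type*} (G : SimpleGraph V) (S : Set V) : Set V :=
  {v | v ∉ S ∧ ∃ u ∈ S, G.Adj u v}

/-- The node-isoperimetric parameter of `G` at `s`: the minimum size of the node border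
over all vertex sets of cardinality `s`. -/
noncomputable def phiV {V : Type*} [Fintype V] (G : SimpleGraph V) (s : ℕ) : ℕ :=
  sInf {b : ℕ | ∃ S : Set V, S.ncard = s ∧ b = (nodeBorder G S).ncard}

/-- The sequence `x_1 = 1`, `x_{i+1} = x_i + Φ_V(G, x_i) + 1` (0-indexed: `coolXseq G i`
is `x_{i+1}`), truncating `x_i` at `|V(G)|` when forming `Φ_V`. -/
noncomputable def coolXseq {V : Type*} [Fintype V] (G : SimpleGraph V) : ℕ → ℕ
  | 0 => 1
  | i + 1 => coolXseq G i + phiV G (min (coolXseq G i) (Fintype.card V)) + 1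

namespace CoolingAux

variable {V : Type*}

/-- first round in which `u` is cooled -/
noncomputable def fc (G : SimpleGraph V) {k : ℕ} (v : Fin k → V) (u : V) : ℕ :=
  sInf {m : ℕ | ∃ i : Fin k, m = (i : ℕ) + 1 + G.dist (v i) u}

lemma fc_le (G : SimpleGraph V) {k : ℕ} (v : Fin k → V) (u : V) (i : Fin k) :
    fc G v u ≤ (i : ℕ) + 1 + G.dist (v i) u := Nat.sInf_le ⟨i, rfl⟩

lemma fc_spec (G : SimpleGraph V) {k : ℕ} (v : Fin k → V) (u : V) (hk : 0 < k) :
    ∃ i : Fin k, fc G v u = (i : ℕ) + 1 + G.dist (v i) u :=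
  Nat.sInf_mem (s := {m : ℕ | ∃ i : Fin k, m = (i : ℕ) + 1 + G.dist (v i) u})
    ⟨(0 : ℕ) + 1 + G.dist (v ⟨0, hk⟩) u, ⟨0, hk⟩, rfl⟩

/-- set of vertices cooled by end of round `t` -/
def Cs (G : SimpleGraph V) {k : ℕ} (v : Fin k → V) (t : ℕ) : Set V := {u | fc G v u ≤ t}

lemma Cs_mono (G : SimpleGraph V) {k : ℕ} (v : Fin k → V) {t t' : ℕ} (h : t ≤ t') :
    Cs G v t ⊆ Cs G v t' := fun u hu => le_trans hu h

lemma source_not_in (G : SimpleGraph V) (hG : G.Connected) {k : ℕ} (v : Fin k → V)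
    (hc : IsCoolingSeq G v) (j : ℕ) (hj : j < k) :
    v ⟨j, hj⟩ ∉ Cs G v j ∪ nodeBorder G (Cs G v j) := by
  rintro (h | ⟨hnot, w, hw, hadj⟩)
  · obtain ⟨i, hi⟩ := fc_spec G v (v ⟨j, hj⟩) (by omega)
    have h1 : (i : ℕ) + 1 + G.dist (v i) (v ⟨j, hj⟩) ≤ j := hi ▸ h
    have hij : i < (⟨j, hj⟩ : Fin k) := by
      rw [Fin.lt_def]; simp only []; omega
    have h2 := hc.1 i ⟨j, hj⟩ hij
    simp only [] at h2
    omega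
  · obtain ⟨i, hi⟩ := fc_spec G v w (by omega)
    have h1 : (i : ℕ) + 1 + G.dist (v i) w ≤ j := hi ▸ hw
    have hd1 : G.dist w (v ⟨j, hj⟩) = 1 := SimpleGraph.dist_eq_one_iff_adj.mpr hadj
    have htri : G.dist (v i) (v ⟨j, hj⟩) ≤ G.dist (v i) w + G.dist w (v ⟨j, hj⟩) :=
      hG.dist_triangle
    have hij : i < (⟨j, hj⟩ : Fin k) := by rw [Fin.lt_def]; simp only []; omega
    have h2 := hc.1 i ⟨j, hj⟩ hij
    simp only [] at h2
    omega

lemma border_subset_next (G : SimpleGraph V) (hG : G.Connected) {k : ℕ} (hk : 0 < k)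
    (v : Fin k → V) (t : ℕ) :
    Cs G v t ∪ nodeBorder G (Cs G v t) ⊆ Cs G v (t + 1) := by
  rintro u (h | ⟨hnot, w, hw, hadj⟩)
  · exact le_trans h (Nat.le_succ t)
  · obtain ⟨i, hi⟩ := fc_spec G v w hk
    have h1 : (i : ℕ) + 1 + G.dist (v i) w ≤ t := hi ▸ hw
    have hd1 : G.dist w u = 1 := SimpleGraph.dist_eq_one_iff_adj.mpr hadj
    have htri : G.dist (v i) u ≤ G.dist (v i) w + G.dist w u := hG.dist_triangle
    have := fc_le G v u i
    show fc G v u ≤ t + 1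
    omega

lemma nodeBorder_subset (G : SimpleGraph V) {S C : Set V} (hSC : S ⊆ C) :
    nodeBorder G S ⊆ C ∪ nodeBorder G C := by
  rintro u ⟨hnot, w, hw, hadj⟩
  by_cases hu : u ∈ C
  · exact Or.inl hu
  · exact Or.inr ⟨hu, w, hSC hw, hadj⟩

end CoolingAux


namespace CoolingAux

open Set

lemma growth {V : Type*} [Fintype V] (G : SimpleGraph V) (hG : G.Connected) {k : ℕ}
    (v : Fin k → V) (hc : IsCoolingSeq G v) :
    ∀ j, j < k → coolXseq G j ≤ (Cs G v (j + 1)).ncard := by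
  intro j
  induction j with
  | zero =>
    intro hj
    have hmem : v ⟨0, hj⟩ ∈ Cs G v 1 := by
      have := fc_le G v (v ⟨0, hj⟩) ⟨0, hj⟩
      simp [SimpleGraph.dist_self] at this
      exact le_trans this (by omega)
    have : 0 < (Cs G v 1).ncard := (Set.ncard_pos (Set.toFinite _)).mpr ⟨_, hmem⟩
    simpa [coolXseq] using Nat.succ_le_of_lt this
  | succ j ih =>
    intro hj
    have hj' : j < k := by omega
    have hk : 0 < k := by omega
    have hx := ih hj'
    set x := coolXseq G j with hxdef
    have hCn : (Cs G v (j + 1)).ncard ≤ Fintype.card V := by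
      have h1 : (Cs G v (j + 1)).ncard ≤ (Set.univ : Set V).ncard :=
        Set.ncard_le_ncard (Set.subset_univ _) (Set.toFinite _)
      rwa [Set.ncard_univ, Nat.card_eq_fintype_card] at h1
    have hxn : x ≤ Fintype.card V := le_trans hx hCn
    obtain ⟨S, hSsub, hScard⟩ := Set.exists_subset_card_eq hx
    have hphi : phiV G x ≤ (nodeBorder G S).ncard := Nat.sInf_le ⟨S, hScard, rfl⟩
    -- containments into round j+2
    have hnext : Cs G v (j + 1) ∪ nodeBorder G (Cs G v (j + 1)) ⊆ Cs G v (j + 2) :=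
      border_subset_next G hG hk v (j + 1)
    have hSN : S ∪ nodeBorder G S ⊆ Cs G v (j + 1) ∪ nodeBorder G (Cs G v (j + 1)) := by
      apply Set.union_subset
      · exact fun u hu => Or.inl (hSsub hu)
      · exact nodeBorder_subset G hSsub
    have hvnew : v ⟨j + 1, hj⟩ ∈ Cs G v (j + 2) := by
      have := fc_le G v (v ⟨j + 1, hj⟩) ⟨j + 1, hj⟩
      simp [SimpleGraph.dist_self] at this
      exact le_trans this (by omega)
    have hvnot : v ⟨j + 1, hj⟩ ∉ S ∪ nodeBorder G S := by
      intro h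
      exact source_not_in G hG v hc (j + 1) hj (hSN h)
    have hsub : insert (v ⟨j + 1, hj⟩) (S ∪ nodeBorder G S) ⊆ Cs G v (j + 2) := by
      apply Set.insert_subset hvnew
      exact fun u hu => hnext (hSN hu)
    have hdisj : Disjoint S (nodeBorder G S) :=
      Set.disjoint_left.mpr fun a ha hb => hb.1 ha
    have hcount : x + (nodeBorder G S).ncard + 1 ≤ (Cs G v (j + 2)).ncard := by
      have h1 : (insert (v ⟨j + 1, hj⟩) (S ∪ nodeBorder G S)).ncard
          = (S ∪ nodeBorder G S).ncard + 1 :=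
        Set.ncard_insert_of_notMem hvnot (Set.toFinite _)
      have h2 : (S ∪ nodeBorder G S).ncard = S.ncard + (nodeBorder G S).ncard :=
        Set.ncard_union_eq hdisj (Set.toFinite _) (Set.toFinite _)
      have h3 := Set.ncard_le_ncard hsub (Set.toFinite _)
      rw [h1, h2, hScard] at h3
      omega
    have hxeq : coolXseq G (j + 1) = x + phiV G x + 1 := by
      rw [coolXseq, ← hxdef, min_eq_left hxn]
    show coolXseq G (j + 1) ≤ (Cs G v (j + 2)).ncard
    omega

end CoolingAux

lemma coolXseq_ge {V : Type*} [Fintype V] (G : SimpleGraph V) : ∀ m, m + 1 ≤ coolXseq G m := by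
  intro m
  induction m with
  | zero => simp [coolXseq]
  | succ m ih => rw [coolXseq]; omega

/-- If `I` is the smallest (1-based) index with `x_I ≥ n`, then `CL(G) ≤ I`. -/
theorem coolingNumber_le_isoperimetric {V : Type*} [Fintype V] (G : SimpleGraph V)
    (hG : G.Connected) :
    coolingNumber G ≤ sInf {i : ℕ | Fintype.card V ≤ coolXseq G i} + 1 := by
  classical
  apply csSup_le'
  rintro T ⟨k, v, hc, rfl⟩
  rcases isEmpty_or_nonempty V with hV | hV
  · have : coolTime G v = 0 := by
      simp [coolTime, Finset.univ_eq_empty]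
    simp [this]
  · have hk : 0 < k := by
      obtain ⟨i, -⟩ := hc.2 (Classical.arbitrary V)
      exact i.pos
    have hTk : coolTime G v ≤ k + 1 := by
      apply Finset.sup_le
      intro u _
      obtain ⟨i, hi⟩ := hc.2 u
      exact le_trans (CoolingAux.fc_le G v u i) hi
    set n := Fintype.card V with hn
    have hne : {i : ℕ | n ≤ coolXseq G i}.Nonempty := by
      refine ⟨n, ?_⟩
      have := coolXseq_ge G n
      simp only [Set.mem_setOf_eq]
      omega
    set I := sInf {i : ℕ | n ≤ coolXseq G i} with hI
    have hImem : n ≤ coolXseq G I := Nat.sInf_mem hne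
    by_contra hlt
    push_neg at hlt
    have hIk : I + 1 < k + 1 := lt_of_lt_of_le hlt hTk
    obtain ⟨u, -, hu⟩ := Finset.exists_mem_eq_sup Finset.univ Finset.univ_nonempty
      (CoolingAux.fc G v)
    have husup : coolTime G v = CoolingAux.fc G v u := hu
    have hunot : u ∉ CoolingAux.Cs G v (I + 1) := by
      intro h
      have : CoolingAux.fc G v u ≤ I + 1 := h
      omega
    have hssub : CoolingAux.Cs G v (I + 1) ⊂ Set.univ :=
      Set.ssubset_univ_iff.mpr (fun h => hunot (h ▸ Set.mem_univ u))
    have hlt2 : (CoolingAux.Cs G v (I + 1)).ncard < n := by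
      have := Set.ncard_lt_ncard hssub (Set.toFinite _)
      rwa [Set.ncard_univ, Nat.card_eq_fintype_card] at this
    have := CoolingAux.growth G hG v hc I (by omega)
    omega
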